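/- arXiv:2103.11962 — 2 statements merged into one kernel-verified Lean document; each statement's English description precedes it below -/
import Mathlib

section
/- Let P be a composite interpolation matrix such that for each k: (Ψ_k Ψ_k^T) P = (Ψ_k Ψ_k^T) P (Ψ̄_k Ψ̄_k^T) (i.e., rows of P associated with region k only have nonzeros in columns associated with region k). Define the replicated-interface regional matrix ⟦P⟧ = blockdiag(Ψ_1^T P Ψ̄_1, ..., Ψ_m^T P Ψ̄_m). Then ⟦P⟧ Ψ̄^T = Ψ^T P. -/
open Matrix

theorem stmt6 {n nc m : ℕ} (ι ιc : Fin m → Type)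
    [∀ k, Fintype (ι k)] [∀ k, DecidableEq (ι k)]
    [∀ k, Fintype (ιc k)] [∀ k, DecidableEq (ιc k)]
    (Ψk : ∀ k, Matrix (Fin n) (ι k) ℝ) (Ψck : ∀ k, Matrix (Fin nc) (ιc k) ℝ)
    (g : ∀ k, ι k → Fin n) (hg : ∀ k, Function.Injective (g k))
    (hΨk : ∀ k i j, Ψk k i j = if i = g k j then 1 else 0)
    (gc : ∀ k, ιc k → Fin nc) (hgc : ∀ k, Function.Injective (gc k))
    (hΨck : ∀ k i j, Ψck k i j = if i = gc k j then 1 else 0)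
    (Ψ : Matrix (Fin n) ((k : Fin m) × ι k) ℝ) (hΨ : ∀ i p, Ψ i p = Ψk p.1 i p.2)
    (Ψc : Matrix (Fin nc) ((k : Fin m) × ιc k) ℝ) (hΨc : ∀ i p, Ψc i p = Ψck p.1 i p.2)
    (P : Matrix (Fin n) (Fin nc) ℝ)
    (hP : ∀ k, (Ψk k * (Ψk k)ᵀ) * P = (Ψk k * (Ψk k)ᵀ) * P * (Ψck k * (Ψck k)ᵀ)) :
    (Matrix.blockDiagonal' fun k => (Ψk k)ᵀ * P * Ψck k) * Ψcᵀ = Ψᵀ * P := by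
  -- row g k i of ΨkΨkᵀ is an indicator
  have h1 : ∀ k (i : ι k) s, (Ψk k * (Ψk k)ᵀ) (g k i) s = if s = g k i then 1 else 0 := by
    intro k i s
    simp only [mul_apply, transpose_apply, hΨk]
    rw [Finset.sum_eq_single i]
    · simp
    · intro t _ ht
      have : g k i ≠ g k t := fun h => ht (hg k h).symm
      simp [this]
    · simp
  have h2 : ∀ k (i : ι k) s, ((Ψk k * (Ψk k)ᵀ) * P) (g k i) s = P (g k i) s := by
    intro k i s
    simp only [mul_apply (M := Ψk k * (Ψk k)ᵀ), h1]
    simp only [mul_apply, h1, ite_mul, one_mul, zero_mul, Finset.sum_ite_eq']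
    simp
  have h3 : ∀ k (i : ι k) t, ((Ψk k)ᵀ * P * Ψck k) i t = P (g k i) (gc k t) := by
    intro k i t
    simp only [mul_apply, transpose_apply, hΨk, hΨck, ite_mul, mul_ite, one_mul, zero_mul,
      mul_one, mul_zero, Finset.sum_ite_eq, Finset.sum_ite_eq']
    simp
  have key : ∀ k (i : ι k) j, P (g k i) j
      = ∑ t : ιc k, P (g k i) (gc k t) * (if j = gc k t then 1 else 0) := by
    intro k i j
    have h := congrFun (congrFun (hP k) (g k i)) j
    rw [h2] at h
    rw [h]
    simp only [mul_apply (M := Ψk k * (Ψk k)ᵀ * P), h2]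
    simp only [mul_apply, h2, hΨck, Finset.mul_sum]
    rw [Finset.sum_comm]
    refine Finset.sum_congr rfl fun t _ => ?_
    rw [Finset.sum_eq_single (gc k t)] <;> simp +contextual [hΨck, mul_ite]
  ext ⟨k, i⟩ j
  have hrhs : (Ψᵀ * P) ⟨k, i⟩ j = P (g k i) j := by
    simp only [mul_apply, transpose_apply, hΨ, hΨk]
    rw [Finset.sum_eq_single (g k i)] <;> simp +contextual
  rw [hrhs, key k i j]
  rw [mul_apply, ← Finset.univ_sigma_univ, Finset.sum_sigma]
  rw [Finset.sum_eq_single k]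
  · refine Finset.sum_congr rfl fun t _ => ?_
    rw [transpose_apply, blockDiagonal'_apply_eq, h3, hΨc, hΨck]
  · intro l _ hl
    simp [blockDiagonal'_apply_ne _ _ _ (Ne.symm hl)]
  · simp
end

section
/- Let R be a composite restriction matrix such that for each k: R (Ψ_k Ψ_k^T) = (Ψ̄_k Ψ̄_k^T) R (Ψ_k Ψ_k^T) (i.e., columns of R associated with region k only have nonzeros in rows associated with region k). Define ⟦R⟧ = blockdiag(Ψ̄_1^T R Ψ_1, ..., Ψ̄_m^T R Ψ_m). Then Ψ̄ ⟦R⟧ = R Ψ. -/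
open Matrix

theorem stmt7 {n nc m : ℕ} (ι ιc : Fin m → Type)
    [∀ k, Fintype (ι k)] [∀ k, DecidableEq (ι k)]
    [∀ k, Fintype (ιc k)] [∀ k, DecidableEq (ιc k)]
    (Ψk : ∀ k, Matrix (Fin n) (ι k) ℝ) (Ψck : ∀ k, Matrix (Fin nc) (ιc k) ℝ)
    (g : ∀ k, ι k → Fin n) (hg : ∀ k, Function.Injective (g k))
    (hΨk : ∀ k i j, Ψk k i j = if i = g k j then 1 else 0)
    (gc : ∀ k, ιc k → Fin nc) (hgc : ∀ k, Function.Injective (gc k))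
    (hΨck : ∀ k i j, Ψck k i j = if i = gc k j then 1 else 0)
    (Ψ : Matrix (Fin n) ((k : Fin m) × ι k) ℝ) (hΨ : ∀ i p, Ψ i p = Ψk p.1 i p.2)
    (Ψc : Matrix (Fin nc) ((k : Fin m) × ιc k) ℝ) (hΨc : ∀ i p, Ψc i p = Ψck p.1 i p.2)
    (R : Matrix (Fin nc) (Fin n) ℝ)
    (hR : ∀ k, R * (Ψk k * (Ψk k)ᵀ) = (Ψck k * (Ψck k)ᵀ) * R * (Ψk k * (Ψk k)ᵀ)) :
    Ψc * (Matrix.blockDiagonal' fun k => (Ψck k)ᵀ * R * Ψk k) = R * Ψ := by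
  have horth : ∀ k, (Ψk k)ᵀ * Ψk k = 1 := by
    intro k
    ext a b
    simp only [Matrix.mul_apply, Matrix.transpose_apply, hΨk, Matrix.one_apply]
    rw [Finset.sum_eq_single (g k a)]
    · by_cases h : a = b
      · subst h; simp
      · have : g k a ≠ g k b := fun hc => h (hg k hc)
        simp [this, h]
    · intro i _ hi
      simp [hi]
    · simp
  have hR' : ∀ k, R * Ψk k = Ψck k * ((Ψck k)ᵀ * (R * Ψk k)) := by
    intro k
    have := congrArg (· * Ψk k) (hR k)
    calc R * Ψk k = R * (Ψk k * (Ψk k)ᵀ) * Ψk k := by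
          rw [Matrix.mul_assoc, Matrix.mul_assoc, horth k, Matrix.mul_one]
      _ = (Ψck k * (Ψck k)ᵀ) * R * (Ψk k * (Ψk k)ᵀ) * Ψk k := by rw [hR k]
      _ = Ψck k * ((Ψck k)ᵀ * (R * Ψk k)) := by
          rw [Matrix.mul_assoc ((Ψck k * (Ψck k)ᵀ) * R), Matrix.mul_assoc (Ψk k),
            horth k, Matrix.mul_one]
          simp [Matrix.mul_assoc]
  ext i p
  obtain ⟨k, j⟩ := p
  have : (Ψc * (Matrix.blockDiagonal' fun k => (Ψck k)ᵀ * R * Ψk k)) i ⟨k, j⟩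
      = (Ψck k * ((Ψck k)ᵀ * (R * Ψk k))) i j := by
    simp only [Matrix.mul_apply]
    rw [← Finset.univ_sigma_univ, Finset.sum_sigma]
    rw [Finset.sum_eq_single k]
    · congr 1
      ext j'
      rw [hΨc, Matrix.blockDiagonal'_apply_eq]
      simp only [Matrix.mul_apply, Finset.mul_sum, Finset.sum_mul, mul_assoc]
      rw [Finset.sum_comm]
    · intro k' _ hk'
      apply Finset.sum_eq_zero
      intro j' _
      rw [Matrix.blockDiagonal'_apply_ne _ _ _ hk', mul_zero]
    · simp
  rw [this, ← hR' k]
  simp [Matrix.mul_apply, hΨ]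
end
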